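/- Let (Ω, 𝓕, P) be a probability space and T : Ω → Ω a measurable, measure-preserving map. Suppose that for every measurable set B and every ε > 0 there exist N ∈ ℕ and a measurable set C with P(B Δ C) ≤ ε such that C and (T^[N])⁻¹(C) are independent events. Then T is ergodic: every measurable set B with T⁻¹(B) = B satisfies P(B) = 0 or P(B) = 1. -/

import Mathlib

open MeasureTheory ENNReal

/-- Ergodicity criterion: if every event can be approximated (in symmetric difference) by
events that become independent of their iterated preimages, then the measure-preserving
map `T` is ergodic. -/
theorem stmt_1 {Ω : Type*} [MeasurableSpace Ω] (P : Measure Ω) [IsProbabilityMeasure P]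
    (T : Ω → Ω) (hT : MeasurePreserving T P P)
    (h : ∀ B : Set Ω, MeasurableSet B → ∀ ε : ℝ≥0∞, 0 < ε →
      ∃ (N : ℕ) (C : Set Ω), MeasurableSet C ∧ P (symmDiff B C) ≤ ε ∧
        P (C ∩ (T^[N]) ⁻¹' C) = P C * P ((T^[N]) ⁻¹' C)) :
    ∀ B : Set Ω, MeasurableSet B → T ⁻¹' B = B → P B = 0 ∨ P B = 1 := by
  intro B hB hTB
  set a : ℝ := (P B).toReal with ha
  have hBinv : ∀ N : ℕ, (T^[N]) ⁻¹' B = B := by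
    intro N
    induction N with
    | zero => simp
    | succ n ih =>
      rw [Function.iterate_succ', Set.preimage_comp, hTB, ih]
  have ha01 : 0 ≤ a ∧ a ≤ 1 := by
    constructor
    · exact ENNReal.toReal_nonneg
    · rw [ha]
      exact ENNReal.toReal_le_of_le_ofReal zero_le_one (by simpa using prob_le_one)
  -- key estimate: |a - a^2| ≤ 4ε for all ε > 0
  have key : ∀ ε : ℝ, 0 < ε → |a - a * a| ≤ 4 * ε := by
    intro ε hε
    obtain ⟨N, C, hC, hsd, hind⟩ := h B hB (ENNReal.ofReal ε) (ENNReal.ofReal_pos.mpr hε)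
    set c : ℝ := (P C).toReal with hc
    set D : Set Ω := (T^[N]) ⁻¹' C with hD
    set d : ℝ := (P D).toReal with hd
    have hDm : MeasurableSet D := (hT.iterate N).measurable hC
    have hsd' : (P (symmDiff B C)).toReal ≤ ε :=
      ENNReal.toReal_le_of_le_ofReal hε.le hsd
    have h1 : |a - c| ≤ ε :=
      le_trans (abs_measureReal_sub_le_measureReal_symmDiff hB.nullMeasurableSet
        hC.nullMeasurableSet (μ := P)) hsd'
    have hBD : P (symmDiff B D) = P (symmDiff B C) := by
      have : symmDiff B D = (T^[N]) ⁻¹' (symmDiff B C) := by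
        rw [Set.preimage_symmDiff, hBinv N]
      rw [this, (hT.iterate N).measure_preimage
        ((hB.symmDiff hC).nullMeasurableSet)]
    have h2 : |a - d| ≤ ε := by
      refine le_trans (abs_measureReal_sub_le_measureReal_symmDiff hB.nullMeasurableSet
        hDm.nullMeasurableSet (μ := P)) ?_
      rw [measureReal_def, hBD]; exact hsd'
    have hc01 : 0 ≤ c ∧ c ≤ 1 :=
      ⟨ENNReal.toReal_nonneg, ENNReal.toReal_le_of_le_ofReal zero_le_one (by simpa using prob_le_one)⟩
    have hd01 : 0 ≤ d ∧ d ≤ 1 :=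
      ⟨ENNReal.toReal_nonneg, ENNReal.toReal_le_of_le_ofReal zero_le_one (by simpa using prob_le_one)⟩
    -- |a - P(C ∩ D)| ≤ 2ε
    have hsub : symmDiff B (C ∩ D) ⊆ symmDiff B C ∪ symmDiff B D := by
      intro x hx
      simp only [Set.mem_union, Set.symmDiff_def, Set.mem_union, Set.mem_diff,
        Set.mem_inter_iff] at hx ⊢
      tauto
    have h3 : |a - (P (C ∩ D)).toReal| ≤ 2 * ε := by
      refine le_trans (abs_measureReal_sub_le_measureReal_symmDiff hB.nullMeasurableSet
        (hC.inter hDm).nullMeasurableSet (μ := P)) ?_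
      have : P (symmDiff B (C ∩ D)) ≤ P (symmDiff B C) + P (symmDiff B D) :=
        le_trans (measure_mono hsub) (measure_union_le _ _)
      rw [hBD] at this
      calc (P (symmDiff B (C ∩ D))).toReal
          ≤ (P (symmDiff B C) + P (symmDiff B C)).toReal := by
            apply ENNReal.toReal_mono _ this
            exact ENNReal.add_ne_top.mpr ⟨measure_ne_top _ _, measure_ne_top _ _⟩
        _ = (P (symmDiff B C)).toReal + (P (symmDiff B C)).toReal := by
            rw [ENNReal.toReal_add (measure_ne_top _ _) (measure_ne_top _ _)]
        _ ≤ 2 * ε := by linarith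
    have h4 : (P (C ∩ D)).toReal = c * d := by
      rw [hind, ENNReal.toReal_mul]
    have h5 : |a * a - c * d| ≤ 2 * ε := by
      have : a * a - c * d = (a - c) * a + c * (a - d) := by ring
      rw [this]
      calc |(a - c) * a + c * (a - d)| ≤ |(a - c) * a| + |c * (a - d)| := abs_add_le _ _
        _ = |a - c| * |a| + |c| * |a - d| := by rw [abs_mul, abs_mul]
        _ ≤ ε * 1 + 1 * ε := by
            have := abs_of_nonneg ha01.1
            have := abs_of_nonneg hc01.1
            have h1' := abs_nonneg (a - c)
            have h2' := abs_nonneg (a - d)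
            nlinarith [ha01.2, hc01.2]
        _ = 2 * ε := by ring
    calc |a - a * a| ≤ |a - (P (C ∩ D)).toReal| + |(P (C ∩ D)).toReal - a * a| := abs_sub_le _ _ _
      _ ≤ 2 * ε + 2 * ε := by
          refine add_le_add h3 ?_
          rw [h4, abs_sub_comm]; exact h5
      _ = 4 * ε := by ring
  have haa : a = a * a := by
    by_contra hne
    have hpos : 0 < |a - a * a| := abs_pos.mpr (sub_ne_zero.mpr hne)
    have := key (|a - a * a| / 8) (by linarith)
    linarith
  have h01 : a = 0 ∨ a = 1 := by
    have hz : a * (1 - a) = 0 := by nlinarith [haa]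
    rcases mul_eq_zero.mp hz with h0 | h1
    · exact Or.inl h0
    · exact Or.inr (by linarith)
  rcases h01 with h0 | h1
  · left
    rcases (ENNReal.toReal_eq_zero_iff _).mp h0 with hh | hh
    · exact hh
    · exact absurd hh (measure_ne_top P B)
  · right
    have hne : P B ≠ ⊤ := measure_ne_top P B
    have := ENNReal.ofReal_toReal hne
    rw [← this, ← ha, h1, ENNReal.ofReal_one]
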